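/- Main theorem: the PCA F_A on {0,1}^ℤ has a unique invariant probability measure, namely μ = (δ_{(01)^ℤ} + δ_{(10)^ℤ})/2, and F_A is non-ergodic: there exists a probability measure ν on {0,1}^ℤ such that νF_A^n does not converge weakly to μ. (Theorem 3.1.) -/

import Mathlib

open MeasureTheory ProbabilityTheory Filter

/-!
Conventions: a configuration of model A is `x : ℤ → Bool` (`false` = 0, `true` = 1);
an update configuration is `u : ℤ → Bool` (`true` = ↑, `false` = →).
The space `ℤ → Bool` carries the product topology (with `Bool` discrete) and the
product (Borel) σ-algebra; weak convergence is tested on bounded continuous functions.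
-/

/-- The local map `𝒜` of model A: the `i`-th coordinate of `𝒜(x,u)` is `0` if
`x_{i-1}x_i = 01` or `(x_{i-1}x_i, u_i) ∈ {(00,→),(11,↑)}`, and `1` if
`x_{i-1}x_i = 10` or `(x_{i-1}x_i, u_i) ∈ {(00,↑),(11,→)}`.  The induced PCA has
alphabet `{0,1}`, neighborhood `{-1,0}` and transition function `a` with
`a(00)(1) = 1/2`, `a(01)(1) = 0`, `a(10)(1) = 1`, `a(11)(1) = 1/2`. -/
def modelA (x u : ℤ → Bool) : ℤ → Bool := fun i =>
  if x (i - 1) = x i then xor (x i) (u i) else x (i - 1)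

/-- `lam` is the product over `ℤ` of the uniform measure on the two-element update
alphabet `𝒰`. -/
def IsUniformProduct (lam : Measure (ℤ → Bool)) : Prop :=
  IsProbabilityMeasure lam ∧
    ∀ (s : Finset ℤ) (f : ℤ → Bool),
      lam {u | ∀ i ∈ s, u i = f i} = (1 / 2 : ENNReal) ^ s.card

/-- `μ F_A`: the pushforward of `μ ⊗ lam` under `𝒜`. -/
noncomputable def FA (lam μ : Measure (ℤ → Bool)) : Measure (ℤ → Bool) :=
  Measure.map (fun p : (ℤ → Bool) × (ℤ → Bool) => modelA p.1 p.2) (μ.prod lam)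

/-- The configuration `(01)^ℤ`: `x_{2n} = 0`, `x_{2n+1} = 1`. -/
def conf01 : ℤ → Bool := fun i => decide (i % 2 = 1)

/-- The configuration `(10)^ℤ`: `x_{2n} = 1`, `x_{2n+1} = 0`. -/
def conf10 : ℤ → Bool := fun i => decide (i % 2 = 0)

/-- The measure `μ = (δ_{(01)^ℤ} + δ_{(10)^ℤ})/2`. -/
noncomputable def muA : Measure (ℤ → Bool) :=
  (1 / 2 : ENNReal) • (Measure.dirac conf01 + Measure.dirac conf10)


/-! ### basic measurability -/

lemma measurable_modelA : Measurable (fun p : (ℤ → Bool) × (ℤ → Bool) => modelA p.1 p.2) := by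
  apply measurable_pi_lambda
  intro i
  unfold modelA
  have h1 : Measurable fun p : (ℤ → Bool) × (ℤ → Bool) => p.1 (i - 1) :=
    (measurable_pi_apply _).comp measurable_fst
  have h2 : Measurable fun p : (ℤ → Bool) × (ℤ → Bool) => p.1 i :=
    (measurable_pi_apply _).comp measurable_fst
  have h3 : Measurable fun p : (ℤ → Bool) × (ℤ → Bool) => p.2 i :=
    (measurable_pi_apply _).comp measurable_snd
  have : (fun p : (ℤ → Bool) × (ℤ → Bool) =>
      if p.1 (i - 1) = p.1 i then xor (p.1 i) (p.2 i) else p.1 (i - 1)) =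
      (fun q : Bool × Bool × Bool => if q.1 = q.2.1 then xor q.2.1 q.2.2 else q.1) ∘
        (fun p : (ℤ → Bool) × (ℤ → Bool) => (p.1 (i-1), p.1 i, p.2 i)) := rfl
  rw [this]
  exact (measurable_of_countable _).comp (h1.prodMk (h2.prodMk h3))

/-- events defined by finitely many coordinates / cylinders are measurable -/
lemma measurableSet_cyl (s : Finset ℤ) (f : ℤ → Bool) :
    MeasurableSet {u : ℤ → Bool | ∀ i ∈ s, u i = f i} := by
  have : {u : ℤ → Bool | ∀ i ∈ s, u i = f i} = ⋂ i ∈ s, {u : ℤ → Bool | u i = f i} := by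
    ext u; simp
  rw [this]
  refine MeasurableSet.biInter s.countable_toSet (fun i _ => ?_)
  have : {u : ℤ → Bool | u i = f i} = (fun u : ℤ → Bool => u i) ⁻¹' {f i} := rfl
  rw [this]
  exact (measurable_pi_apply i) (measurableSet_singleton _)

/-- the defect event -/
def D (i : ℤ) : Set (ℤ → Bool) := {x | x (i - 1) = x i}

lemma measurableSet_eqcoord (i j : ℤ) : MeasurableSet {x : ℤ → Bool | x i = x j} := by
  have : {x : ℤ → Bool | x i = x j} =
      (fun x : ℤ → Bool => (x i, x j)) ⁻¹' {q : Bool × Bool | q.1 = q.2} := rfl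
  rw [this]
  exact ((measurable_pi_apply i).prodMk (measurable_pi_apply j))
    ((Set.to_countable _).measurableSet)

lemma measurableSet_D (i : ℤ) : MeasurableSet (D i) := measurableSet_eqcoord _ _
/-! ### lam cylinder computations -/

section Lam
variable {lam : Measure (ℤ → Bool)}

lemma lam_univ (hlam : IsUniformProduct lam) : lam Set.univ = 1 := hlam.1.measure_univ

lemma lam_single (hlam : IsUniformProduct lam) (i : ℤ) (v : Bool) : lam {u | u i = v} = 1/2 := by
  have h := hlam.2 {i} (fun _ => v)
  simp only [Finset.mem_singleton, forall_eq, Finset.card_singleton, pow_one] at h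
  exact h

lemma lam_pair (hlam : IsUniformProduct lam) {i j : ℤ} (hij : i ≠ j) (v w : Bool) :
    lam {u | u i = v ∧ u j = w} = 1/4 := by
  have h := hlam.2 {i, j} (fun k => if k = i then v else w)
  rw [Finset.card_insert_of_notMem (by simpa using hij), Finset.card_singleton] at h
  have hset : {u : ℤ → Bool | ∀ k ∈ ({i, j} : Finset ℤ), u k = (if k = i then v else w)} =
      {u | u i = v ∧ u j = w} := by
    ext u
    simp only [Finset.mem_insert, Finset.mem_singleton, Set.mem_setOf_eq]
    constructor
    · intro h; exact ⟨by simpa using h i (Or.inl rfl), by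
        have := h j (Or.inr rfl); simpa [if_neg (Ne.symm hij)] using this⟩
    · rintro ⟨h1, h2⟩ k hk
      rcases hk with rfl | rfl
      · simpa using h1
      · simpa [if_neg (Ne.symm hij)] using h2
  rw [hset] at h
  rw [h]
  rw [show (1:ℕ)+1 = 2 from rfl, pow_two, one_div, ← ENNReal.mul_inv (by norm_num) (by norm_num)]
  norm_num

/-- lam of cylinder given by agreeing with v on an explicit finset, lower bound -/
lemma lam_cyl_ge (hlam : IsUniformProduct lam) (s : Finset ℤ) (v : ℤ → Bool) (hcard : s.card ≤ 4) :
    (1/16 : ENNReal) ≤ lam {u | ∀ i ∈ s, u i = v i} := by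
  rw [hlam.2 s v]
  have h12 : (1/2 : ENNReal) ≤ 1 := by norm_num
  calc (1/16 : ENNReal) = (1/2)^4 := by
        rw [one_div, one_div, ← ENNReal.inv_pow]; norm_num
    _ ≤ (1/2)^s.card := pow_le_pow_of_le_one (zero_le ..) h12 hcard

end Lam

/-! ### FA applied to a measurable set -/

lemma FA_apply {lam : Measure (ℤ → Bool)} (hlam : IsUniformProduct lam)
    (ν : Measure (ℤ → Bool)) [SFinite ν] {E : Set (ℤ → Bool)} (hE : MeasurableSet E) :
    FA lam ν E = ∫⁻ x, lam {u | modelA x u ∈ E} ∂ν := by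
  haveI : IsProbabilityMeasure lam := hlam.1
  rw [FA, Measure.map_apply measurable_modelA hE, Measure.prod_apply (measurable_modelA hE)]
  rfl
/-! ### the one-step relation for defect probabilities -/

lemma modelA_defect {x u : ℤ → Bool} {i : ℤ} (h : x (i - 1) = x i) :
    modelA x u i = xor (x i) (u i) := if_pos h

lemma modelA_nodefect {x u : ℤ → Bool} {i : ℤ} (h : ¬ x (i - 1) = x i) :
    modelA x u i = x (i - 1) := if_neg h

lemma bool_xor_eq_iff (a b c : Bool) : (xor a b = c) = (b = xor a c) := by
  revert a b c; decide

lemma bool_xor_eq_self (a b : Bool) : (xor a b = a) = (b = false) := by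
  revert a b; decide

lemma bool_xor_eq_xor (a b c : Bool) : (xor a b = xor a c) = (b = c) := by
  revert a b c; decide

lemma quarter_add_quarter : (1/4 : ENNReal) + 1/4 = 1/2 := by
  rw [one_div, one_div, ← two_mul]
  rw [show (4:ENNReal) = 2*2 by norm_num, ENNReal.mul_inv (by norm_num) (by norm_num)]
  rw [← mul_assoc, ENNReal.mul_inv_cancel (by norm_num) (by norm_num), one_mul]

lemma lam_eq_pair {lam : Measure (ℤ → Bool)} (hlam : IsUniformProduct lam)
    {i j : ℤ} (hij : i ≠ j) : lam {u | u i = u j} = 1/2 := by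
  have hsplit : {u : ℤ → Bool | u i = u j} =
      {u | u i = false ∧ u j = false} ∪ {u | u i = true ∧ u j = true} := by
    ext u
    simp only [Set.mem_setOf_eq, Set.mem_union]
    cases h1 : u i <;> cases h2 : u j <;> simp
  have hcoord : ∀ (k : ℤ) (v : Bool), MeasurableSet {u : ℤ → Bool | u k = v} := by
    intro k v
    have : {u : ℤ → Bool | u k = v} = (fun u : ℤ → Bool => u k) ⁻¹' {v} := rfl
    rw [this]
    exact (measurable_pi_apply k) (measurableSet_singleton v)
  have hmeas : MeasurableSet {u : ℤ → Bool | u i = true ∧ u j = true} := by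
    have : {u : ℤ → Bool | u i = true ∧ u j = true} =
        {u : ℤ → Bool | u i = true} ∩ {u : ℤ → Bool | u j = true} := rfl
    rw [this]
    exact (hcoord i true).inter (hcoord j true)
  have hdisj : Disjoint {u : ℤ → Bool | u i = false ∧ u j = false}
      {u : ℤ → Bool | u i = true ∧ u j = true} := by
    rw [Set.disjoint_left]
    rintro u ⟨h1, _⟩ ⟨h2, _⟩
    rw [h1] at h2; exact Bool.false_ne_true h2
  rw [hsplit, measure_union hdisj hmeas, lam_pair hlam hij, lam_pair hlam hij]
  rw [show (1/4 : ENNReal) + 1/4 = 1/2 from quarter_add_quarter]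

lemma pointwise1 {lam : Measure (ℤ → Bool)} (hlam : IsUniformProduct lam)
    (i : ℤ) (x : ℤ → Bool) :
    lam {u | modelA x u (i-1) = modelA x u i} =
      Set.indicator (D (i-1) ∪ D i) (fun _ => (1/2 : ENNReal)) x := by
  have hne : (i : ℤ) - 1 ≠ i := by omega
  by_cases h1 : x (i - 1 - 1) = x (i - 1) <;> by_cases h2 : x (i - 1) = x i
  · -- both defects
    have hmem : x ∈ D (i-1) ∪ D i := Or.inr h2
    rw [Set.indicator_of_mem hmem]
    have : {u : ℤ → Bool | modelA x u (i-1) = modelA x u i} = {u | u (i-1) = u i} := by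
      ext u
      rw [Set.mem_setOf_eq, modelA_defect h1, modelA_defect h2, ← h2, bool_xor_eq_xor]
      rfl
    rw [this, lam_eq_pair hlam hne]
  · -- defect at i-1 only
    have hmem : x ∈ D (i-1) ∪ D i := Or.inl h1
    rw [Set.indicator_of_mem hmem]
    have : {u : ℤ → Bool | modelA x u (i-1) = modelA x u i} = {u | u (i-1) = false} := by
      ext u
      rw [Set.mem_setOf_eq, modelA_defect h1, modelA_nodefect h2, bool_xor_eq_self]
      rfl
    rw [this, lam_single hlam]
  · -- defect at i only
    have hmem : x ∈ D (i-1) ∪ D i := Or.inr h2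
    rw [Set.indicator_of_mem hmem]
    have : {u : ℤ → Bool | modelA x u (i-1) = modelA x u i} =
        {u | u i = xor (x i) (x (i-1-1))} := by
      ext u
      rw [Set.mem_setOf_eq, modelA_nodefect h1, modelA_defect h2, Set.mem_setOf_eq]
      have : ∀ a b c : Bool, (c = xor a b) ↔ (b = xor a c) := by decide
      exact this _ _ _
    rw [this, lam_single hlam]
  · -- no defects
    have hmem : x ∉ D (i-1) ∪ D i := by
      rintro (h | h)
      · exact h1 h
      · exact h2 h
    rw [Set.indicator_of_notMem hmem]
    have : {u : ℤ → Bool | modelA x u (i-1) = modelA x u i} = ∅ := by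
      ext u
      rw [Set.mem_setOf_eq, modelA_nodefect h1, modelA_nodefect h2]
      simp only [Set.mem_empty_iff_false, iff_false]
      exact h1
    rw [this, measure_empty]

lemma rel1 {lam ν : Measure (ℤ → Bool)} (hlam : IsUniformProduct lam)
    [IsProbabilityMeasure ν] (hinv : FA lam ν = ν) (i : ℤ) :
    ν (D (i-1) ∩ D i) + ν (D i) = ν (D (i-1)) := by
  have key : ν (D i) = (1/2) * ν (D (i-1) ∪ D i) := by
    conv_lhs => rw [← hinv, FA_apply hlam ν (measurableSet_D i)]
    have : ∀ x, lam {u | modelA x u ∈ D i} =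
        Set.indicator (D (i-1) ∪ D i) (fun _ => (1/2 : ENNReal)) x := by
      intro x
      exact pointwise1 hlam i x
    rw [lintegral_congr this, lintegral_indicator_const
      ((measurableSet_D (i-1)).union (measurableSet_D i))]
  have hui : ν (D (i-1) ∪ D i) + ν (D (i-1) ∩ D i) = ν (D (i-1)) + ν (D i) :=
    measure_union_add_inter (D (i-1)) (measurableSet_D i)
  have hU : ν (D (i-1) ∪ D i) = ν (D i) + ν (D i) := by
    rw [key, ← two_mul, ← mul_assoc, one_div,
      ENNReal.mul_inv_cancel (by norm_num) (by norm_num), one_mul]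
  rw [hU] at hui
  have hfin : ν (D i) ≠ ⊤ := measure_ne_top ν _
  have h2 : ν (D i) + (ν (D (i-1) ∩ D i) + ν (D i)) = ν (D i) + ν (D (i-1)) :=
    calc ν (D i) + (ν (D (i-1) ∩ D i) + ν (D i))
        = ν (D i) + ν (D i) + ν (D (i-1) ∩ D i) := by ring
      _ = ν (D (i-1)) + ν (D i) := hui
      _ = ν (D i) + ν (D (i-1)) := add_comm _ _
  exact (ENNReal.add_right_inj hfin).mp h2
/-! ### pair correlation inequalities -/

lemma bool_xor_xor (a b : Bool) : xor a (xor a b) = b := by revert a b; decide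

lemma pointwise2 {x u : ℤ → Bool} {i e : ℤ}
    (hx1 : x (i-e-1-1) = x (i-e-1)) (hx2 : x (i-1) = x i)
    (h1 : u (i-e-1) = false) (h2 : u (i-e) = false) (h3 : u (i-1) = false)
    (h4 : u i = xor (x i) (if x (i-1-1) = x (i-1) then x (i-1) else x (i-1-1))) :
    modelA x u (i-e-1) = modelA x u (i-e) ∧ modelA x u (i-1) = modelA x u i := by
  have hy1 : modelA x u (i-e-1) = x (i-e-1) := by
    rw [modelA_defect hx1, h1, Bool.xor_false]
  have hy2 : modelA x u (i-e) = x (i-e-1) := by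
    by_cases hd : x (i-e-1) = x (i-e)
    · rw [modelA_defect hd, h2, Bool.xor_false, hd]
    · rw [modelA_nodefect hd]
  have hy3 : modelA x u (i-1) = (if x (i-1-1) = x (i-1) then x (i-1) else x (i-1-1)) := by
    by_cases hd : x (i-1-1) = x (i-1)
    · rw [modelA_defect hd, h3, Bool.xor_false, if_pos hd]
    · rw [modelA_nodefect hd, if_neg hd]
  have hy4 : modelA x u i = (if x (i-1-1) = x (i-1) then x (i-1) else x (i-1-1)) := by
    rw [modelA_defect hx2, h4, bool_xor_xor]
  exact ⟨hy1.trans hy2.symm, hy3.trans hy4.symm⟩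

lemma rel2 {lam ν : Measure (ℤ → Bool)} (hlam : IsUniformProduct lam)
    [IsProbabilityMeasure ν] (hinv : FA lam ν = ν) (i e : ℤ) (he : 1 ≤ e) :
    ν (D (i-e-1) ∩ D i) ≤ 16 * ν (D (i-e) ∩ D i) := by
  have hEmeas : MeasurableSet (D (i-e) ∩ D i) :=
    (measurableSet_D _).inter (measurableSet_D _)
  have hkey : ν (D (i-e) ∩ D i) = ∫⁻ x, lam {u | modelA x u ∈ D (i-e) ∩ D i} ∂ν := by
    conv_lhs => rw [← hinv, FA_apply hlam ν hEmeas]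
  have lower : ∀ x, Set.indicator (D (i-e-1) ∩ D i) (fun _ => (1/16 : ENNReal)) x ≤
      lam {u | modelA x u ∈ D (i-e) ∩ D i} := by
    intro x
    by_cases hx : x ∈ D (i-e-1) ∩ D i
    · rw [Set.indicator_of_mem hx]
      have hx1 : x (i-e-1-1) = x (i-e-1) := hx.1
      have hx2 : x (i-1) = x i := hx.2
      set S : Finset ℤ := {i-e-1, i-e, i-1, i} with hS
      set v : ℤ → Bool := fun j => if j = i
        then xor (x i) (if x (i-1-1) = x (i-1) then x (i-1) else x (i-1-1))
        else false with hv
      have hcard : S.card ≤ 4 := by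
        refine le_trans (Finset.card_insert_le _ _) (Nat.succ_le_succ ?_)
        refine le_trans (Finset.card_insert_le _ _) (Nat.succ_le_succ ?_)
        refine le_trans (Finset.card_insert_le _ _) (Nat.succ_le_succ ?_)
        simp
      have hsub : {u : ℤ → Bool | ∀ j ∈ S, u j = v j} ⊆
          {u | modelA x u ∈ D (i-e) ∩ D i} := by
        intro u hu
        have h1 : u (i-e-1) = false := by
          have := hu (i-e-1) (by simp [hS])
          simpa [hv, show ¬(i - e - 1 = i) by omega] using this
        have h2 : u (i-e) = false := by
          have := hu (i-e) (by simp [hS])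
          simpa [hv, show ¬(i - e = i) by omega] using this
        have h3 : u (i-1) = false := by
          have := hu (i-1) (by simp [hS])
          simpa [hv, show ¬(i - 1 = i) by omega] using this
        have h4 : u i = xor (x i) (if x (i-1-1) = x (i-1) then x (i-1) else x (i-1-1)) := by
          have := hu i (by simp [hS])
          simpa [hv] using this
        exact (pointwise2 hx1 hx2 h1 h2 h3 h4 : _)
      calc (1/16 : ENNReal) ≤ lam {u : ℤ → Bool | ∀ j ∈ S, u j = v j} :=
            lam_cyl_ge hlam S v hcard
        _ ≤ lam {u | modelA x u ∈ D (i-e) ∩ D i} := measure_mono hsub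
    · rw [Set.indicator_of_notMem hx]
      exact zero_le ..
  have hlow : (1/16 : ENNReal) * ν (D (i-e-1) ∩ D i) ≤ ν (D (i-e) ∩ D i) := by
    rw [hkey, ← lintegral_indicator_const ((measurableSet_D _).inter (measurableSet_D _))]
    exact lintegral_mono lower
  calc ν (D (i-e-1) ∩ D i) = 16 * ((1/16 : ENNReal) * ν (D (i-e-1) ∩ D i)) := by
        rw [← mul_assoc, one_div, ENNReal.mul_inv_cancel (by norm_num) (by norm_num), one_mul]
    _ ≤ 16 * ν (D (i-e) ∩ D i) := mul_le_mul_right hlow 16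

lemma chain {lam ν : Measure (ℤ → Bool)} (hlam : IsUniformProduct lam)
    [IsProbabilityMeasure ν] (hinv : FA lam ν = ν) (i : ℤ) (d : ℕ) :
    ν (D (i - d - 1) ∩ D i) ≤ 16^d * ν (D (i-1) ∩ D i) := by
  induction d with
  | zero => simp
  | succ d ih =>
      have he : (1:ℤ) ≤ (d:ℤ) + 1 := by omega
      have h := rel2 hlam hinv i ((d:ℤ)+1) he
      have e1 : i - ((d:ℤ)+1) - 1 = i - ((d:ℕ)+1:ℕ) - 1 := by push_cast; ring
      have e2 : i - ((d:ℤ)+1) = i - (d:ℕ) - 1 := by push_cast; ring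
      rw [e1, e2] at h
      calc ν (D (i - ((d:ℕ)+1:ℕ) - 1) ∩ D i) ≤ 16 * ν (D (i - (d:ℕ) - 1) ∩ D i) := h
        _ ≤ 16 * (16^d * ν (D (i-1) ∩ D i)) := mul_le_mul_right ih 16
        _ = 16^(d+1) * ν (D (i-1) ∩ D i) := by rw [← mul_assoc, pow_succ, mul_comm (16^d) 16]
/-! ### defect probabilities vanish for invariant measures -/

section Vanish

variable {lam ν : Measure (ℤ → Bool)}

lemma p_mono (hlam : IsUniformProduct lam) [IsProbabilityMeasure ν] (hinv : FA lam ν = ν) :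
    ∀ j k : ℤ, j ≤ k → ν (D k) ≤ ν (D j) := by
  intro j k hjk
  refine Int.le_induction (motive := fun k _ => ν (D k) ≤ ν (D j)) (le_refl _) (fun n _ ih => ?_) k hjk
  have h := rel1 hlam hinv (n+1)
  have : ν (D (n+1)) ≤ ν (D (n+1-1)) := le_add_self.trans (le_of_eq h)
  rw [show (n:ℤ)+1-1 = n by ring] at this
  exact this.trans ih

lemma q_sum (hlam : IsUniformProduct lam) [IsProbabilityMeasure ν] (hinv : FA lam ν = ν) (a : ℤ) :
    ∀ n : ℕ, ∑ k ∈ Finset.range n, ν (D (a + k - 1) ∩ D (a + k)) + ν (D (a + n - 1))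
      = ν (D (a - 1)) := by
  intro n
  induction n with
  | zero => simp
  | succ n ih =>
      rw [Finset.sum_range_succ]
      have h := rel1 hlam hinv (a + n)
      have e1 : a + ((n:ℕ)+1:ℕ) - 1 = a + (n:ℕ) := by push_cast; ring
      rw [e1]
      calc ∑ k ∈ Finset.range n, ν (D (a + k - 1) ∩ D (a + k))
            + ν (D (a + n - 1) ∩ D (a + n)) + ν (D (a + n))
          = ∑ k ∈ Finset.range n, ν (D (a + k - 1) ∩ D (a + k))
            + (ν (D (a + n - 1) ∩ D (a + n)) + ν (D (a + n))) := by ring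
        _ = ∑ k ∈ Finset.range n, ν (D (a + k - 1) ∩ D (a + k)) + ν (D (a + n - 1)) := by
            rw [h]
        _ = ν (D (a - 1)) := ih

lemma q_sum_le_one (hlam : IsUniformProduct lam) [IsProbabilityMeasure ν] (hinv : FA lam ν = ν) (a : ℤ) (n : ℕ) :
    ∑ k ∈ Finset.range n, ν (D (a + k - 1) ∩ D (a + k)) ≤ 1 :=
  calc ∑ k ∈ Finset.range n, ν (D (a + k - 1) ∩ D (a + k))
      ≤ ∑ k ∈ Finset.range n, ν (D (a + k - 1) ∩ D (a + k)) + ν (D (a + n - 1)) :=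
        le_self_add
    _ = ν (D (a - 1)) := q_sum hlam hinv a n
    _ ≤ 1 := prob_le_one

lemma q_finset_sum_le_one (hlam : IsUniformProduct lam) [IsProbabilityMeasure ν] (hinv : FA lam ν = ν) (F : Finset ℤ) :
    ∑ j ∈ F, ν (D (j - 1) ∩ D j) ≤ 1 := by
  rcases Finset.eq_empty_or_nonempty F with rfl | hF
  · simp
  · set a := F.min' hF
    set b := F.max' hF
    set n : ℕ := (b - a).toNat + 1
    have hsub : F ⊆ Finset.image (fun k : ℕ => a + k) (Finset.range n) := by
      intro j hj
      have h1 : a ≤ j := F.min'_le j hj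
      have h2 : j ≤ b := F.le_max' j hj
      rw [Finset.mem_image]
      exact ⟨(j - a).toNat, Finset.mem_range.mpr (by omega), by omega⟩
    calc ∑ j ∈ F, ν (D (j - 1) ∩ D j)
        ≤ ∑ j ∈ Finset.image (fun k : ℕ => a + k) (Finset.range n),
            ν (D (j - 1) ∩ D j) :=
          Finset.sum_le_sum_of_subset hsub
      _ = ∑ k ∈ Finset.range n, ν (D (a + k - 1) ∩ D (a + k)) := by
          rw [Finset.sum_image]
          intro s _ t _ hst
          simpa using hst
      _ ≤ 1 := q_sum_le_one hlam hinv a n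

lemma q_small (hlam : IsUniformProduct lam) [IsProbabilityMeasure ν] (hinv : FA lam ν = ν) (m : ℕ) (hm : 1 ≤ m)
    (c : ℤ) (n : ℕ) :
    ∃ a : ℤ, a + n ≤ c ∧
      ∀ k : ℕ, k < n → ν (D (a + k - 1) ∩ D (a + k)) ≤ ((m : ENNReal))⁻¹ := by
  set B : Set ℤ := {j : ℤ | (m : ENNReal)⁻¹ < ν (D (j - 1) ∩ D j)} with hB
  have hBfin : B.Finite := by
    by_contra hInf
    have hInf2 : B.Infinite := hInf
    obtain ⟨F, hFB, hFcard⟩ := hInf2.exists_subset_card_eq (m + 1)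
    have hsum : ∑ j ∈ F, ν (D (j - 1) ∩ D j) ≤ 1 := q_finset_sum_le_one hlam hinv F
    have hlower : ∑ j ∈ F, ((m:ENNReal))⁻¹ ≤ ∑ j ∈ F, ν (D (j - 1) ∩ D j) :=
      Finset.sum_le_sum (fun j hj => le_of_lt (hFB hj))
    rw [Finset.sum_const, hFcard] at hlower
    have hval : (m + 1 : ℕ) • ((m:ENNReal))⁻¹ = 1 + (m:ENNReal)⁻¹ := by
      rw [nsmul_eq_mul]
      push_cast
      rw [add_mul, one_mul, ENNReal.mul_inv_cancel
        (by exact_mod_cast (by omega : m ≠ 0)) (by exact ENNReal.natCast_ne_top m)]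
    rw [hval] at hlower
    have hmne : ((m:ENNReal))⁻¹ ≠ 0 := by
      simp [ENNReal.inv_ne_zero]
    have : (1 : ENNReal) < 1 + (m:ENNReal)⁻¹ := ENNReal.lt_add_right ENNReal.one_ne_top hmne
    exact absurd (le_trans hlower hsum) (not_le.mpr this)
  obtain ⟨M, hM⟩ := hBfin.bddBelow
  refine ⟨min (c - n) (M - n), by
    have := min_le_left (c - (n:ℤ)) (M - n); omega, fun k hk => ?_⟩
  by_contra hgt
  push_neg at hgt
  have hmem : (min (c - (n:ℤ)) (M - n) + k) ∈ B := hgt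
  have := hM hmem
  have h2 := min_le_right (c - (n:ℤ)) (M - n)
  omega

lemma p_zero (hlam : IsUniformProduct lam) [IsProbabilityMeasure ν] (hinv : FA lam ν = ν) (i : ℤ) : ν (D i) = 0 := by
  have key : ∀ n : ℕ, 1 ≤ n → (n : ENNReal) * ν (D i) ≤ 2 := by
    intro n hn
    set m : ℕ := n ^ 4 * 16 ^ n with hm
    have hm1 : 1 ≤ m := by
      have h0 : 0 < n ^ 4 * 16 ^ n := by positivity
      omega
    obtain ⟨a, hac, hq⟩ := q_small hlam hinv m hm1 i n
    -- the bad set: two defects in the window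
    set Pair : ℕ × ℕ → Set (ℤ → Bool) :=
      fun r => if r.1 < r.2 then D (a + r.1) ∩ D (a + r.2) else ∅ with hPair
    set Bad : Set (ℤ → Bool) := ⋃ r ∈ (Finset.range n ×ˢ Finset.range n), Pair r with hBad
    have hPair_pos : ∀ r : ℕ × ℕ, r.1 < r.2 → Pair r = D (a + r.1) ∩ D (a + r.2) := by
      intro r h
      simp only [hPair]
      rw [if_pos h]
    have hPair_neg : ∀ r : ℕ × ℕ, ¬ r.1 < r.2 → Pair r = ∅ := by
      intro r h
      simp only [hPair]
      rw [if_neg h]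
    have hPairMeas : ∀ r : ℕ × ℕ, MeasurableSet (Pair r) := by
      intro r
      by_cases h : r.1 < r.2
      · rw [hPair_pos r h]; exact (measurableSet_D _).inter (measurableSet_D _)
      · rw [hPair_neg r h]; exact MeasurableSet.empty
    have hBadMeas : MeasurableSet Bad :=
      (Finset.range n ×ˢ Finset.range n).measurableSet_biUnion (fun r _ => hPairMeas r)
    -- each pair has small probability
    have hPairLe : ∀ r : ℕ × ℕ, r ∈ Finset.range n ×ˢ Finset.range n →
        ν (Pair r) ≤ (16:ENNReal) ^ n * ((m:ENNReal))⁻¹ := by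
      intro r hr
      rw [Finset.mem_product, Finset.mem_range, Finset.mem_range] at hr
      by_cases h : r.1 < r.2
      · rw [hPair_pos r h]
        set d : ℕ := r.2 - r.1 - 1 with hd
        have hidx : a + (r.1 : ℤ) = (a + r.2) - (d:ℤ) - 1 := by
          rw [hd]; push_cast [Nat.cast_sub (by omega : 1 ≤ r.2 - r.1),
            Nat.cast_sub (by omega : r.1 ≤ r.2)]; ring
        have hchain := chain hlam hinv (a + r.2) d
        rw [← hidx] at hchain
        have h16 : (16:ENNReal) ^ d ≤ 16 ^ n :=
          pow_le_pow_right₀ (by norm_num) (by omega)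
        have hqr : ν (D (a + (r.2:ℤ) - 1) ∩ D (a + r.2)) ≤ ((m:ENNReal))⁻¹ :=
          hq r.2 hr.2
        calc ν (D (a + (r.1:ℤ)) ∩ D (a + r.2))
            ≤ 16 ^ d * ν (D (a + (r.2:ℤ) - 1) ∩ D (a + (r.2:ℤ))) := hchain
          _ ≤ 16 ^ n * ((m:ENNReal))⁻¹ := mul_le_mul' h16 hqr
      · rw [hPair_neg r h]; simp
    have hBadLe : ν Bad ≤ (n^2 : ℕ) • ((16:ENNReal) ^ n * ((m:ENNReal))⁻¹) := by
      calc ν Bad ≤ ∑ r ∈ Finset.range n ×ˢ Finset.range n, ν (Pair r) :=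
            measure_biUnion_finset_le _ _
        _ ≤ (Finset.range n ×ˢ Finset.range n).card •
              ((16:ENNReal) ^ n * ((m:ENNReal))⁻¹) :=
            Finset.sum_le_card_nsmul _ _ _ hPairLe
        _ = (n^2 : ℕ) • ((16:ENNReal) ^ n * ((m:ENNReal))⁻¹) := by
            rw [Finset.card_product, Finset.card_range, pow_two]
    -- the window events minus Bad are pairwise disjoint
    have hdisj : Set.PairwiseDisjoint ↑(Finset.range n)
        (fun k : ℕ => D (a + k) \ Bad) := by
      intro s hs t ht hst
      rw [Function.onFun]
      rw [Set.disjoint_left]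
      rintro x ⟨hxs, hxB⟩ ⟨hxt, -⟩
      apply hxB
      rw [Finset.mem_coe, Finset.mem_range] at hs ht
      rcases lt_or_gt_of_ne hst with h | h
      · rw [hBad]
        simp only [Set.mem_iUnion]
        exact ⟨(s, t), Finset.mem_product.mpr
          ⟨Finset.mem_range.mpr hs, Finset.mem_range.mpr ht⟩,
          by rw [hPair_pos _ h]; exact ⟨hxs, hxt⟩⟩
      · rw [hBad]
        simp only [Set.mem_iUnion]
        exact ⟨(t, s), Finset.mem_product.mpr
          ⟨Finset.mem_range.mpr ht, Finset.mem_range.mpr hs⟩,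
          by rw [hPair_pos _ h]; exact ⟨hxt, hxs⟩⟩
    have hdiff_sum : ∑ k ∈ Finset.range n, ν (D (a + k) \ Bad) ≤ 1 := by
      rw [← measure_biUnion_finset hdisj
        (fun k _ => (measurableSet_D _).diff hBadMeas)]
      exact prob_le_one
    -- decompose and combine
    have hdecomp : ∀ k : ℕ, ν (D (a + k)) = ν (D (a + k) \ Bad) + ν (D (a + k) ∩ Bad) :=
      fun k => (measure_diff_add_inter _ hBadMeas).symm
    have hup : ∑ k ∈ Finset.range n, ν (D (a + k)) ≤ 1 + (n:ℕ) • ν Bad := by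
      calc ∑ k ∈ Finset.range n, ν (D (a + k))
          = ∑ k ∈ Finset.range n, (ν (D (a + k) \ Bad) + ν (D (a + k) ∩ Bad)) := by
            exact Finset.sum_congr rfl (fun k _ => hdecomp k)
        _ = ∑ k ∈ Finset.range n, ν (D (a + k) \ Bad)
            + ∑ k ∈ Finset.range n, ν (D (a + k) ∩ Bad) := Finset.sum_add_distrib
        _ ≤ 1 + ∑ k ∈ Finset.range n, ν Bad := by
            refine add_le_add hdiff_sum (Finset.sum_le_sum (fun k _ => ?_))
            exact measure_mono Set.inter_subset_right
        _ = 1 + (n:ℕ) • ν Bad := by rw [Finset.sum_const, Finset.card_range]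
    have hlow : (n : ENNReal) * ν (D i) ≤ ∑ k ∈ Finset.range n, ν (D (a + k)) := by
      calc (n : ENNReal) * ν (D i) = ∑ _k ∈ Finset.range n, ν (D i) := by
            rw [Finset.sum_const, Finset.card_range, nsmul_eq_mul]
        _ ≤ ∑ k ∈ Finset.range n, ν (D (a + k)) :=
            Finset.sum_le_sum (fun k hk => p_mono hlam hinv (a + k) i
              (by rw [Finset.mem_range] at hk; omega))
    -- final numeric bound
    have hnum : (n:ℕ) • ((n^2 : ℕ) • ((16:ENNReal) ^ n * ((m:ENNReal))⁻¹)) ≤ 1 := by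
      rw [nsmul_eq_mul, nsmul_eq_mul, ← mul_assoc, ← mul_assoc]
      have hA : (n : ENNReal) * (n^2 : ℕ) * 16 ^ n = ((n^3 * 16^n : ℕ) : ENNReal) := by
        push_cast; ring
      rw [hA]
      have hle : ((n^3 * 16^n : ℕ) : ENNReal) ≤ ((m:ℕ) : ENNReal) := by
        rw [Nat.cast_le, hm]
        have : n^3 ≤ n^4 := Nat.pow_le_pow_right (by omega) (by omega)
        exact Nat.mul_le_mul this (le_refl _)
      calc ((n^3 * 16^n : ℕ) : ENNReal) * ((m:ENNReal))⁻¹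
          ≤ ((m:ℕ) : ENNReal) * ((m:ENNReal))⁻¹ := mul_le_mul_left hle _
        _ = 1 := ENNReal.mul_inv_cancel
            (by exact_mod_cast (by omega : m ≠ 0)) (ENNReal.natCast_ne_top m)
    calc (n : ENNReal) * ν (D i)
        ≤ 1 + (n:ℕ) • ν Bad := le_trans hlow hup
      _ ≤ 1 + (n:ℕ) • ((n^2 : ℕ) • ((16:ENNReal) ^ n * ((m:ENNReal))⁻¹)) := by
          exact add_le_add_right (nsmul_le_nsmul_right hBadLe _) 1
      _ ≤ 1 + 1 := add_le_add_right hnum 1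
      _ = 2 := one_add_one_eq_two
  by_contra hp0
  have hfin : ν (D i) ≠ ⊤ := measure_ne_top ν _
  obtain ⟨n, hn⟩ := ENNReal.exists_nat_gt (ENNReal.div_lt_top (ENNReal.ofNat_ne_top (n := 2)) hp0).ne
  have h2 : (2:ENNReal) < n * ν (D i) := by
    rw [← ENNReal.div_lt_iff (Or.inl hp0) (Or.inl hfin)]
    exact hn
  have hn1 : 1 ≤ n := by
    by_contra h
    push_neg at h
    interval_cases n
    simp at h2
  exact absurd (key n hn1) (not_le.mpr h2)

end Vanish
/-! ### configurations without defects -/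

lemma bool_ne_iff (a b : Bool) : a ≠ b ↔ b = !a := by revert a b; decide

lemma conf01_succ (i : ℤ) : conf01 (i + 1) = !(conf01 i) := by
  show decide ((i+1) % 2 = 1) = !decide (i % 2 = 1)
  rw [← decide_not, decide_eq_decide]
  omega

lemma conf10_eq_not_conf01 (i : ℤ) : conf10 i = !(conf01 i) := by
  show decide (i % 2 = 0) = !decide (i % 2 = 1)
  rw [← decide_not, decide_eq_decide]
  omega

lemma conf01_zero : conf01 0 = false := by decide

lemma conf01_ne_conf10 : conf01 ≠ conf10 := by
  intro h
  have := congrFun h 0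
  rw [conf01_zero] at this
  exact Bool.false_ne_true (by simpa [conf10] using this.symm)

lemma alternating_classify (x : ℤ → Bool) (h : ∀ i : ℤ, x (i - 1) ≠ x i) :
    x = conf01 ∨ x = conf10 := by
  have key : ∀ i : ℤ, x i = xor (x 0) (conf01 i) := by
    intro i
    induction i using Int.induction_on with
    | zero => rw [conf01_zero]; cases x 0 <;> rfl
    | succ k ih =>
        have hk := h ((k : ℤ) + 1)
        rw [show ((k:ℤ) + 1 - 1) = (k:ℤ) by ring] at hk
        rw [(bool_ne_iff _ _).mp hk, ih, conf01_succ]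
        cases x 0 <;> cases conf01 (k:ℤ) <;> rfl
    | pred k ih =>
        have hk := h (-(k : ℤ))
        have hne : x (-(k:ℤ)) = !(x (-(k:ℤ) - 1)) := (bool_ne_iff _ _).mp hk
        have : x (-(k:ℤ) - 1) = !(x (-(k:ℤ))) := by
          rw [hne]; cases x (-(k:ℤ) - 1) <;> rfl
        rw [this, ih]
        have hc : conf01 (-(k:ℤ) - 1) = !(conf01 (-(k:ℤ))) := by
          have := conf01_succ (-(k:ℤ) - 1)
          rw [show (-(k:ℤ) - 1 + 1) = -(k:ℤ) by ring] at this
          rw [this]; cases conf01 (-(k:ℤ) - 1) <;> rfl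
        rw [hc]
        cases x 0 <;> cases conf01 (-(k:ℤ)) <;> rfl
  cases h0 : x 0 with
  | false =>
      left
      funext i
      rw [key i, h0, Bool.false_xor]
  | true =>
      right
      funext i
      rw [key i, h0, Bool.true_xor, conf10_eq_not_conf01]

/-! ### action of FA on the two alternating configurations -/

lemma conf01_step (i : ℤ) : conf01 (i - 1) ≠ conf01 i := by
  show ¬ (decide ((i-1) % 2 = 1) = decide (i % 2 = 1))
  rw [decide_eq_decide]
  omega

lemma conf10_step (i : ℤ) : conf10 (i - 1) ≠ conf10 i := by
  show ¬ (decide ((i-1) % 2 = 0) = decide (i % 2 = 0))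
  rw [decide_eq_decide]
  omega

lemma modelA_conf01 (u : ℤ → Bool) : modelA conf01 u = conf10 := by
  funext i
  rw [modelA_nodefect (conf01_step i)]
  show decide ((i-1) % 2 = 1) = decide (i % 2 = 0)
  rw [decide_eq_decide]
  omega

lemma modelA_conf10 (u : ℤ → Bool) : modelA conf10 u = conf01 := by
  funext i
  rw [modelA_nodefect (conf10_step i)]
  show decide ((i-1) % 2 = 0) = decide (i % 2 = 1)
  rw [decide_eq_decide]
  omega

lemma g_measurable {lam : Measure (ℤ → Bool)} (hlam : IsUniformProduct lam)
    {E : Set (ℤ → Bool)} (hE : MeasurableSet E) :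
    Measurable fun x => lam {u | modelA x u ∈ E} := by
  haveI : IsProbabilityMeasure lam := hlam.1
  have : (fun x => lam {u | modelA x u ∈ E}) =
      fun x => lam (Prod.mk x ⁻¹' ((fun p : (ℤ → Bool) × (ℤ → Bool) => modelA p.1 p.2) ⁻¹' E)) :=
    rfl
  rw [this]
  exact measurable_measure_prodMk_left (measurable_modelA hE)

lemma FA_dirac01 {lam : Measure (ℤ → Bool)} (hlam : IsUniformProduct lam) :
    FA lam (Measure.dirac conf01) = Measure.dirac conf10 := by
  ext E hE
  rw [FA_apply hlam _ hE, lintegral_dirac' _ (g_measurable hlam hE)]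
  simp only [modelA_conf01]
  rw [Measure.dirac_apply' _ hE]
  by_cases hc : conf10 ∈ E
  · have : {u : ℤ → Bool | conf10 ∈ E} = Set.univ := by
      ext u; simp [hc]
    rw [this, lam_univ hlam, Set.indicator_of_mem hc]; rfl
  · have : {u : ℤ → Bool | conf10 ∈ E} = ∅ := by
      ext u; simp [hc]
    rw [this, measure_empty, Set.indicator_of_notMem hc]

lemma FA_dirac10 {lam : Measure (ℤ → Bool)} (hlam : IsUniformProduct lam) :
    FA lam (Measure.dirac conf10) = Measure.dirac conf01 := by
  ext E hE
  rw [FA_apply hlam _ hE, lintegral_dirac' _ (g_measurable hlam hE)]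
  simp only [modelA_conf10]
  rw [Measure.dirac_apply' _ hE]
  by_cases hc : conf01 ∈ E
  · have : {u : ℤ → Bool | conf01 ∈ E} = Set.univ := by
      ext u; simp [hc]
    rw [this, lam_univ hlam, Set.indicator_of_mem hc]; rfl
  · have : {u : ℤ → Bool | conf01 ∈ E} = ∅ := by
      ext u; simp [hc]
    rw [this, measure_empty, Set.indicator_of_notMem hc]

/-! ### invariance of muA -/

lemma muA_univ : muA Set.univ = 1 := by
  simp only [muA, Measure.smul_apply, Measure.add_apply, measure_univ, smul_eq_mul]
  rw [one_add_one_eq_two, one_div, ENNReal.inv_mul_cancel two_ne_zero ENNReal.ofNat_ne_top]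

instance muA_prob : IsProbabilityMeasure muA := ⟨muA_univ⟩

lemma FA_muA {lam : Measure (ℤ → Bool)} (hlam : IsUniformProduct lam) :
    FA lam muA = muA := by
  ext E hE
  rw [FA_apply hlam muA hE]
  rw [muA]
  rw [lintegral_smul_measure, lintegral_add_measure,
    lintegral_dirac' _ (g_measurable hlam hE), lintegral_dirac' _ (g_measurable hlam hE)]
  simp only [modelA_conf01, modelA_conf10]
  have h1 : lam {u : ℤ → Bool | conf10 ∈ E} = (Measure.dirac conf10) E := by
    rw [Measure.dirac_apply' _ hE]
    by_cases hc : conf10 ∈ E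
    · have : {u : ℤ → Bool | conf10 ∈ E} = Set.univ := by ext u; simp [hc]
      rw [this, lam_univ hlam, Set.indicator_of_mem hc]; rfl
    · have : {u : ℤ → Bool | conf10 ∈ E} = ∅ := by ext u; simp [hc]
      rw [this, measure_empty, Set.indicator_of_notMem hc]
  have h2 : lam {u : ℤ → Bool | conf01 ∈ E} = (Measure.dirac conf01) E := by
    rw [Measure.dirac_apply' _ hE]
    by_cases hc : conf01 ∈ E
    · have : {u : ℤ → Bool | conf01 ∈ E} = Set.univ := by ext u; simp [hc]
      rw [this, lam_univ hlam, Set.indicator_of_mem hc]; rfl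
    · have : {u : ℤ → Bool | conf01 ∈ E} = ∅ := by ext u; simp [hc]
      rw [this, measure_empty, Set.indicator_of_notMem hc]
  rw [h1, h2]
  simp only [Measure.smul_apply, Measure.add_apply, smul_eq_mul]
  rw [add_comm]
/-! ### uniqueness of the invariant measure -/

lemma uniqueness {lam ν : Measure (ℤ → Bool)} (hlam : IsUniformProduct lam)
    [IsProbabilityMeasure ν] (hinv : FA lam ν = ν) : ν = muA := by
  -- the support is contained in the two alternating configurations
  set T : Set (ℤ → Bool) := {conf01, conf10} with hT
  have hTmeas : MeasurableSet T := by
    rw [hT]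
    exact (measurableSet_singleton conf10).insert conf01
  have hTc : ν Tᶜ = 0 := by
    have hsub : Tᶜ ⊆ ⋃ i : ℤ, D i := by
      intro x hx
      by_contra hD
      rw [Set.mem_iUnion] at hD
      push_neg at hD
      have halt : ∀ i : ℤ, x (i - 1) ≠ x i := fun i => hD i
      rcases alternating_classify x halt with rfl | rfl
      · exact hx (Or.inl rfl)
      · exact hx (Or.inr rfl)
    exact measure_mono_null hsub (measure_iUnion_null (fun i => p_zero hlam hinv i))
  -- representation of ν as a combination of the two dirac measures
  set A : ENNReal := ν {conf01} with hA
  set B : ENNReal := ν {conf10} with hB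
  have h5 : ∀ (c : ℤ → Bool) (s : Set (ℤ → Bool)), MeasurableSet s →
      ν (s ∩ {c}) = ν {c} * (Measure.dirac c) s := by
    intro c s hs
    rw [Measure.dirac_apply' _ hs]
    by_cases hc : c ∈ s
    · rw [Set.indicator_of_mem hc, Set.inter_eq_self_of_subset_right
        (Set.singleton_subset_iff.mpr hc)]
      rw [Pi.one_apply, mul_one]
    · rw [Set.indicator_of_notMem hc, mul_zero, Set.inter_singleton_eq_empty.mpr hc,
        measure_empty]
  have hνeq : ν = A • Measure.dirac conf01 + B • Measure.dirac conf10 := by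
    ext s hs
    have h1 : ν (s ∩ T) + ν (s \ T) = ν s := measure_inter_add_diff s hTmeas
    have h2 : ν (s \ T) = 0 := measure_mono_null (Set.diff_subset_compl s T) hTc
    have h3 : s ∩ T = (s ∩ {conf01}) ∪ (s ∩ {conf10}) := by
      rw [hT, show ({conf01, conf10} : Set (ℤ → Bool)) = {conf01} ∪ {conf10} from rfl]
      exact Set.inter_union_distrib_left s _ _
    have hdisj : Disjoint (s ∩ {conf01}) (s ∩ {conf10}) := by
      rw [Set.disjoint_left]
      rintro x ⟨-, hx1⟩ ⟨-, hx2⟩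
      rw [Set.mem_singleton_iff] at hx1 hx2
      exact conf01_ne_conf10 (hx1 ▸ hx2)
    have h4 : ν (s ∩ T) = ν (s ∩ {conf01}) + ν (s ∩ {conf10}) := by
      rw [h3, measure_union hdisj (hs.inter (measurableSet_singleton _))]
    calc ν s = ν (s ∩ T) + ν (s \ T) := h1.symm
      _ = ν (s ∩ {conf01}) + ν (s ∩ {conf10}) := by rw [h2, add_zero, h4]
      _ = A * (Measure.dirac conf01) s + B * (Measure.dirac conf10) s := by
          rw [h5 conf01 s hs, h5 conf10 s hs]
      _ = (A • Measure.dirac conf01 + B • Measure.dirac conf10) s := by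
          simp [Measure.smul_apply, Measure.add_apply, smul_eq_mul]
  have hAB : A + B = 1 := by
    have h := hνeq ▸ (measure_univ : ν Set.univ = 1)
    simp only [Measure.add_apply, Measure.smul_apply, measure_univ, smul_eq_mul,
      mul_one] at h
    exact h
  have hBA : B = A := by
    have h01 : FA lam ν {conf01} = A := by rw [hinv, hA]
    rw [FA_apply hlam ν (measurableSet_singleton conf01)] at h01
    rw [hνeq] at h01
    rw [lintegral_add_measure, lintegral_smul_measure, lintegral_smul_measure,
      lintegral_dirac' _ (g_measurable hlam (measurableSet_singleton conf01)),
      lintegral_dirac' _ (g_measurable hlam (measurableSet_singleton conf01))] at h01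
    simp only [modelA_conf01, modelA_conf10] at h01
    have e1 : {u : ℤ → Bool | conf10 ∈ ({conf01} : Set (ℤ → Bool))} = ∅ := by
      ext u
      simp only [Set.mem_setOf_eq, Set.mem_singleton_iff, Set.mem_empty_iff_false,
        iff_false]
      exact fun h => conf01_ne_conf10 h.symm
    have e2 : {u : ℤ → Bool | conf01 ∈ ({conf01} : Set (ℤ → Bool))} = Set.univ := by
      ext u; simp
    rw [e1, e2, measure_empty, smul_zero, zero_add, lam_univ hlam, smul_eq_mul, mul_one] at h01
    exact h01
  have hA2 : A = 1/2 := by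
    rw [ENNReal.eq_div_iff two_ne_zero ENNReal.ofNat_ne_top, two_mul]
    rw [hBA] at hAB
    exact hAB
  rw [hνeq, hBA, hA2, muA, smul_add]
/-! ### non-ergodicity -/

lemma FA_iter {lam : Measure (ℤ → Bool)} (hlam : IsUniformProduct lam) (n : ℕ) :
    (FA lam)^[n] (Measure.dirac conf01) =
      Measure.dirac (if Even n then conf01 else conf10) := by
  induction n with
  | zero => simp
  | succ n ih =>
      rw [Function.iterate_succ_apply', ih]
      by_cases h : Even n
      · rw [if_pos h, if_neg (by simp [Nat.even_add_one, h])]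
        exact FA_dirac01 hlam
      · rw [if_neg h, if_pos (by simp [Nat.even_add_one, h])]
        exact FA_dirac10 hlam

/-- the test function: value of the coordinate at 0 -/
noncomputable def ftest : BoundedContinuousFunction (ℤ → Bool) ℝ :=
  ⟨⟨fun x => if x 0 then 1 else 0, by
      have : (fun x : ℤ → Bool => if x 0 then (1:ℝ) else 0) =
          (fun b : Bool => if b then (1:ℝ) else 0) ∘ (fun x : ℤ → Bool => x 0) := rfl
      rw [this]
      exact Continuous.comp (continuous_of_discreteTopology) (continuous_apply 0)⟩,
    1, by
      intro x y
      simp only [ContinuousMap.coe_mk]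
      by_cases hx : x 0 <;> by_cases hy : y 0 <;>
        simp [hx, hy, Real.dist_eq]⟩

lemma ftest_apply (x : ℤ → Bool) : ftest x = if x 0 then 1 else 0 := rfl

lemma ftest_conf01 : ftest conf01 = 0 := by
  rw [ftest_apply, if_neg]
  rw [conf01_zero]
  exact Bool.false_ne_true

lemma ftest_conf10 : ftest conf10 = 1 := by
  rw [ftest_apply, if_pos]
  show conf10 0 = true
  decide

lemma integral_muA : ∫ x, ftest x ∂muA = 1/2 := by
  rw [muA, integral_smul_measure, integral_add_measure
    (BoundedContinuousFunction.integrable _ ftest) (BoundedContinuousFunction.integrable _ ftest),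
    integral_dirac, integral_dirac, ftest_conf01, ftest_conf10]
  norm_num [ENNReal.toReal_div]

lemma non_ergodic {lam : Measure (ℤ → Bool)} (hlam : IsUniformProduct lam) :
    ¬ (∀ f : BoundedContinuousFunction (ℤ → Bool) ℝ,
        Tendsto (fun n : ℕ => ∫ x, f x ∂((FA lam)^[n] (Measure.dirac conf01))) atTop
          (nhds (∫ x, f x ∂muA))) := by
  intro h
  have h' := h ftest
  rw [integral_muA] at h'
  have hseq : (fun n : ℕ => ∫ x, ftest x ∂((FA lam)^[n] (Measure.dirac conf01))) =
      fun n => if Even n then (0:ℝ) else 1 := by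
    funext n
    rw [FA_iter hlam n]
    rw [integral_dirac]
    by_cases hn : Even n
    · rw [if_pos hn, if_pos hn, ftest_conf01]
    · rw [if_neg hn, if_neg hn, ftest_conf10]
  rw [hseq] at h'
  have h2 : Tendsto (fun k : ℕ => 2 * k) atTop atTop := by
    apply Filter.tendsto_atTop_atTop.mpr
    intro b
    exact ⟨b, fun a ha => by omega⟩
  have h3 : Tendsto ((fun n => if Even n then (0:ℝ) else 1) ∘ (fun k : ℕ => 2 * k))
      atTop (nhds (1/2)) := h'.comp h2
  have h4 : ((fun n => if Even n then (0:ℝ) else 1) ∘ (fun k : ℕ => 2 * k)) =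
      fun _ => (0:ℝ) := by
    funext k
    simp [Function.comp, even_two_mul]
  rw [h4] at h3
  have := tendsto_nhds_unique h3 tendsto_const_nhds
  norm_num at this


/-- Theorem 3.1, main theorem: the PCA `F_A` has
`μ = (δ_{(01)^ℤ} + δ_{(10)^ℤ})/2` as its unique invariant probability measure, and it
is non-ergodic: there is a probability measure `ν` such that `ν F_A^n` does not
converge weakly to `μ`. -/
theorem modelA_unique_invariant_non_ergodic (lam : Measure (ℤ → Bool))
    (hlam : IsUniformProduct lam) :
    FA lam muA = muA ∧
    (∀ ν : Measure (ℤ → Bool), IsProbabilityMeasure ν → FA lam ν = ν → ν = muA) ∧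
    (∃ ν : Measure (ℤ → Bool), IsProbabilityMeasure ν ∧
      ¬ (∀ f : BoundedContinuousFunction (ℤ → Bool) ℝ,
          Tendsto (fun n : ℕ => ∫ x, f x ∂((FA lam)^[n] ν)) atTop
            (nhds (∫ x, f x ∂muA)))) := by

  refine ⟨FA_muA hlam, fun ν hν hinv => ?_, ?_⟩
  · haveI := hν
    exact uniqueness hlam hinv
  · exact ⟨Measure.dirac conf01, by infer_instance, non_ergodic hlam⟩
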